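/- For all n ∈ ℕ and all N ≥ 1, the number of tournaments T on the vertex set {0,1,…,n−1} with i(T) < N is at most n! · 2^{n(N−1)}. -/

import Mathlib

/-- A tournament on a vertex set `V`: a loopless directed graph such that for all
distinct `x, y` exactly one of `(x,y)`, `(y,x)` is an arc. -/
structure Tournament (V : Type*) where
  rel : V → V → Prop
  irrefl : ∀ x, ¬ rel x x
  total : ∀ x y, x ≠ y → rel x y ∨ rel y x
  asymm : ∀ x y, rel x y → ¬ rel y x

namespace Tournament

variable {V : Type*} {W : Type*}

/-- The tournament obtained from `T` by reversing all arcs both of whose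
endpoints lie in `X`. -/
def inv (T : Tournament V) (X : Set V) : Tournament V where
  rel x y := (x ∈ X ∧ y ∈ X ∧ T.rel y x) ∨ ((x ∉ X ∨ y ∉ X) ∧ T.rel x y)
  irrefl x := by have := T.irrefl x; tauto
  total x y hxy := by
    have := T.total x y hxy
    by_cases hx : x ∈ X <;> by_cases hy : y ∈ X <;> tauto
  asymm x y := by have h1 := T.asymm x y; have h2 := T.asymm y x; tauto

/-- Successive inversions along a finite sequence of subsets (`X_0` first). -/
def invSeq (T : Tournament V) (Xs : List (Set V)) : Tournament V :=
  Xs.foldl Tournament.inv T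

/-- A tournament is acyclic (transitive) when its arc relation is transitive,
i.e. a strict linear order. -/
def IsAcyclic (T : Tournament V) : Prop :=
  ∀ x y z, T.rel x y → T.rel y z → T.rel x z

/-- The inversion index: the least number of subsets to be inverted to reach an
acyclic tournament. -/
noncomputable def index (T : Tournament V) : ℕ :=
  sInf {m | ∃ Xs : List (Set V), Xs.length = m ∧ (T.invSeq Xs).IsAcyclic}

/-- Induced subtournament on a set of vertices. -/
def restrict (T : Tournament V) (A : Set V) : Tournament A where
  rel x y := T.rel x y
  irrefl x := T.irrefl x
  total x y hxy := T.total x y (fun h => hxy (Subtype.ext h))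
  asymm x y := T.asymm x y

/-- `T − x`: the subtournament induced on `V ∖ {x}`. -/
def erase (T : Tournament V) (x : V) : Tournament {y : V // y ≠ x} :=
  T.restrict {y | y ≠ x}

/-- `S` embeds into `T`: `S` is isomorphic to the subtournament of `T` induced on
some subset of the vertices of `T`. -/
def Embeds (S : Tournament V) (T : Tournament W) : Prop :=
  ∃ f : V → W, Function.Injective f ∧ ∀ x y, S.rel x y ↔ T.rel (f x) (f y)

/-- Isomorphism of tournaments. -/
def Iso (S : Tournament V) (T : Tournament W) : Prop :=
  ∃ e : V ≃ W, ∀ x y, S.rel x y ↔ T.rel (e x) (e y)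

/-- The dual tournament, obtained by reversing all arcs. -/
def dual (T : Tournament V) : Tournament V where
  rel x y := T.rel y x
  irrefl x := T.irrefl x
  total x y hxy := (T.total x y hxy).symm
  asymm x y h := T.asymm y x h

/-- `X` is an interval of `T`. -/
def IsInterval (T : Tournament V) (X : Set V) : Prop :=
  ∀ y ∉ X, (∀ x ∈ X, T.rel x y) ∨ (∀ x ∈ X, T.rel y x)

/-- A tournament is indecomposable when all its intervals are trivial. -/
def Indecomposable (T : Tournament V) : Prop :=
  ∀ X : Set V, T.IsInterval X → X = ∅ ∨ X = Set.univ ∨ ∃ x, X = {x}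

end Tournament

/-- The transitive tournament `n̲` on `{0, …, n−1}`, with arcs `(i,j)` for `i < j`. -/
def linear (n : ℕ) : Tournament (Fin n) where
  rel x y := x < y
  irrefl x := lt_irrefl x
  total _ _ h := h.lt_or_gt
  asymm _ _ h := lt_asymm h

/-- `2ℕ_{<k} = {0, 2, …, 2(k−1)}` as a subset of `Fin N`. -/
def evensLT {N : ℕ} (k : ℕ) : Set (Fin N) := {i | (i : ℕ) % 2 = 0 ∧ (i : ℕ) < 2 * k}

/-- `2ℕ_{<k}+1 = {1, 3, …, 2k−1}` as a subset of `Fin N`. -/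
def oddsLT {N : ℕ} (k : ℕ) : Set (Fin N) := {i | (i : ℕ) % 2 = 1 ∧ (i : ℕ) < 2 * k}


namespace Tournament

theorem ext' {V : Type*} {T S : Tournament V} (h : ∀ x y, T.rel x y ↔ S.rel x y) : T = S := by
  obtain ⟨r1, a1, b1, c1⟩ := T
  obtain ⟨r2, a2, b2, c2⟩ := S
  have : r1 = r2 := by funext x y; exact propext (h x y)
  subst this
  rfl

theorem inv_inv {V : Type*} (T : Tournament V) (X : Set V) : (T.inv X).inv X = T := by
  apply ext'
  intro x y
  simp only [inv]
  by_cases hx : x ∈ X <;> by_cases hy : y ∈ X <;> tauto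

theorem inv_empty {V : Type*} (T : Tournament V) : T.inv (∅ : Set V) = T := by
  apply ext'
  intro x y
  simp [inv]

theorem invSeq_nil {V : Type*} (T : Tournament V) : T.invSeq [] = T := rfl

theorem invSeq_cons {V : Type*} (T : Tournament V) (X : Set V) (Xs : List (Set V)) :
    T.invSeq (X :: Xs) = (T.inv X).invSeq Xs := rfl

theorem invSeq_append {V : Type*} (T : Tournament V) (Xs Ys : List (Set V)) :
    T.invSeq (Xs ++ Ys) = (T.invSeq Xs).invSeq Ys :=
  List.foldl_append

theorem invSeq_replicate_empty {V : Type*} (T : Tournament V) (k : ℕ) :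
    T.invSeq (List.replicate k (∅ : Set V)) = T := by
  induction k with
  | zero => rfl
  | succ k ih => rw [List.replicate_succ, invSeq_cons, inv_empty, ih]

theorem inv_injective {V : Type*} (X : Set V) :
    Function.Injective (fun T : Tournament V => T.inv X) := by
  intro a b h
  have := congrArg (fun T : Tournament V => T.inv X) h
  simpa [inv_inv] using this

theorem invSeq_injective {V : Type*} (Xs : List (Set V)) :
    Function.Injective (fun T : Tournament V => T.invSeq Xs) := by
  induction Xs with
  | nil => intro a b h; exact h
  | cons X Xs ih =>
    intro a b h
    simp only [invSeq_cons] at h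
    exact inv_injective X (ih h)

/-- Every tournament on `Fin n` can be made acyclic by finitely many inversions. -/
theorem exists_invSeq_acyclic {n : ℕ} (T : Tournament (Fin n)) :
    ∃ Xs : List (Set (Fin n)), (T.invSeq Xs).IsAcyclic := by
  classical
  suffices H : ∀ k (T : Tournament (Fin n)),
      {p : Fin n × Fin n | p.1 < p.2 ∧ T.rel p.2 p.1}.ncard ≤ k →
      ∃ Xs, (T.invSeq Xs).IsAcyclic from
    H _ T le_rfl
  intro k
  induction k with
  | zero =>
    intro T hT
    refine ⟨[], ?_⟩
    have hempty : {p : Fin n × Fin n | p.1 < p.2 ∧ T.rel p.2 p.1} = ∅ := by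
      rw [← Set.ncard_eq_zero (Set.toFinite _)]
      omega
    have hrel : ∀ x y, T.rel x y → x < y := by
      intro x y hxy
      rcases lt_trichotomy x y with h | h | h
      · exact h
      · subst h; exact absurd hxy (T.irrefl x)
      · exfalso
        have : (y, x) ∈ {p : Fin n × Fin n | p.1 < p.2 ∧ T.rel p.2 p.1} := ⟨h, hxy⟩
        rw [hempty] at this
        exact this
    intro x y z h1 h2
    have hxz : x < z := lt_trans (hrel x y h1) (hrel y z h2)
    rcases T.total x z (ne_of_lt hxz) with h | h
    · exact h
    · exact absurd (hrel z x h) (lt_asymm hxz)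
  | succ k ih =>
    intro T hT
    by_cases h : ∃ p : Fin n × Fin n, p.1 < p.2 ∧ T.rel p.2 p.1
    · obtain ⟨⟨a, b⟩, hab, hba⟩ := h
      have hX : ∀ x : Fin n, x ∈ ({a, b} : Set (Fin n)) ↔ x = a ∨ x = b := by
        intro x; simp
      have hset : {p : Fin n × Fin n | p.1 < p.2 ∧ (T.inv {a, b}).rel p.2 p.1} =
          {p : Fin n × Fin n | p.1 < p.2 ∧ T.rel p.2 p.1} \ {(a, b)} := by
        ext ⟨x, y⟩
        simp only [Set.mem_setOf_eq, Set.mem_diff, Set.mem_singleton_iff, Prod.mk.injEq, inv]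
        constructor
        · rintro ⟨hxy, hrel'⟩
          rcases hrel' with ⟨hy, hx, hr⟩ | ⟨_, hr⟩
          · exfalso
            rw [hX] at hx hy
            rcases hx with rfl | rfl <;> rcases hy with rfl | rfl
            · exact absurd hxy (lt_irrefl _)
            · exact T.asymm _ _ hr hba
            · exact absurd (hab.trans hxy) (lt_irrefl _)
            · exact absurd hxy (lt_irrefl _)
          · refine ⟨⟨hxy, hr⟩, ?_⟩
            rintro ⟨rfl, rfl⟩
            simp [hX] at *
        · rintro ⟨⟨hxy, hr⟩, hne⟩
          refine ⟨hxy, ?_⟩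
          by_cases hx : x ∈ ({a, b} : Set (Fin n)) <;> by_cases hy : y ∈ ({a, b} : Set (Fin n))
          · exfalso
            rw [hX] at hx hy
            rcases hx with rfl | rfl <;> rcases hy with rfl | rfl
            · exact absurd hxy (lt_irrefl _)
            · exact hne ⟨rfl, rfl⟩
            · exact absurd (hab.trans hxy) (lt_irrefl _)
            · exact absurd hxy (lt_irrefl _)
          · exact Or.inr ⟨Or.inl hy, hr⟩
          · exact Or.inr ⟨Or.inr hx, hr⟩
          · exact Or.inr ⟨Or.inr hx, hr⟩
        
      have hmem : ((a, b) : Fin n × Fin n) ∈ {p : Fin n × Fin n | p.1 < p.2 ∧ T.rel p.2 p.1} :=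
        ⟨hab, hba⟩
      have hpos : 0 < {p : Fin n × Fin n | p.1 < p.2 ∧ T.rel p.2 p.1}.ncard :=
        (Set.ncard_pos (Set.toFinite _)).mpr ⟨_, hmem⟩
      have hcard : {p : Fin n × Fin n | p.1 < p.2 ∧ (T.inv {a, b}).rel p.2 p.1}.ncard ≤ k := by
        rw [hset, Set.ncard_diff_singleton_of_mem hmem]
        omega
      obtain ⟨Xs, hXs⟩ := ih (T.inv {a, b}) hcard
      exact ⟨({a, b} : Set (Fin n)) :: Xs, hXs⟩
    · apply ih T
      have : {p : Fin n × Fin n | p.1 < p.2 ∧ T.rel p.2 p.1} = ∅ := by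
        ext p
        simp only [Set.mem_setOf_eq, Set.mem_empty_iff_false, iff_false]
        intro hp
        exact h ⟨p, hp⟩
      rw [this]
      simp

/-- An acyclic tournament on `Fin n` is given by a permutation. -/
theorem exists_perm {n : ℕ} (A : Tournament (Fin n)) (hA : A.IsAcyclic) :
    ∃ σ : Equiv.Perm (Fin n), ∀ x y, A.rel x y ↔ σ x < σ y := by
  classical
  set r : Fin n → ℕ := fun x => {y | A.rel y x}.ncard with hr
  have hmono : ∀ x y, A.rel x y → r x < r y := by
    intro x y hxy
    apply Set.ncard_lt_ncard _ (Set.toFinite _)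
    constructor
    · intro z hz
      exact hA z x y hz hxy
    · intro hsub
      exact A.irrefl x (hsub hxy)
  have hlt : ∀ x, r x < n := by
    intro x
    have hss : {y | A.rel y x} ⊂ Set.univ := by
      constructor
      · exact Set.subset_univ _
      · intro hsub
        exact A.irrefl x (hsub (Set.mem_univ x))
    have := Set.ncard_lt_ncard hss (Set.toFinite _)
    simpa [Set.ncard_univ] using this
  set σ : Fin n → Fin n := fun x => ⟨r x, hlt x⟩ with hσdef
  have hinj : Function.Injective σ := by
    intro x y hxy
    by_contra hne
    have hval : r x = r y := congrArg Fin.val hxy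
    rcases A.total x y hne with h | h
    · exact absurd hval (Nat.ne_of_lt (hmono x y h))
    · exact absurd hval.symm (Nat.ne_of_lt (hmono y x h))
  refine ⟨Equiv.ofBijective σ (Finite.injective_iff_bijective.mp hinj), fun x y => ?_⟩
  simp only [Equiv.ofBijective_apply]
  constructor
  · intro h
    exact hmono x y h
  · intro h
    have hlt' : r x < r y := h
    have hne : x ≠ y := by
      rintro rfl
      exact absurd hlt' (lt_irrefl _)
    rcases A.total x y hne with h1 | h1
    · exact h1
    · exact absurd hlt' (lt_asymm (hmono y x h1))

end Tournament

/-- for all `n` and `N ≥ 1`, the number of tournaments on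
`{0, …, n−1}` of inversion index `< N` is at most `n! · 2^{n(N−1)}`. -/
theorem count_index_lt {n N : ℕ} (hN : 1 ≤ N) :
    {T : Tournament (Fin n) | T.index < N}.ncard ≤
      Nat.factorial n * 2 ^ (n * (N - 1)) := by
  classical
  obtain ⟨M, hM⟩ : ∃ M, N - 1 = M := ⟨_, rfl⟩
  set S := {T : Tournament (Fin n) | T.index < N} with hS
  have key : ∀ T : ↥S, ∃ p : Equiv.Perm (Fin n) × (Fin M → Set (Fin n)),
      ∀ x y, ((T : Tournament (Fin n)).invSeq (List.ofFn p.2)).rel x y ↔ p.1 x < p.1 y := by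
    rintro ⟨T, hT⟩
    have hidx : T.index < N := hT
    obtain ⟨Xs0, hXs0⟩ := Tournament.exists_invSeq_acyclic T
    have hne : {m | ∃ Xs : List (Set (Fin n)), Xs.length = m ∧ (T.invSeq Xs).IsAcyclic}.Nonempty :=
      ⟨Xs0.length, Xs0, rfl, hXs0⟩
    have hmem := Nat.sInf_mem hne
    obtain ⟨Xs1, hlen1, hacy1⟩ := hmem
    have hidx' : Xs1.length ≤ M := by
      have : Xs1.length = T.index := hlen1
      omega
    obtain ⟨Xs, hlen, hacy⟩ : ∃ Xs : List (Set (Fin n)),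
        Xs.length = M ∧ (T.invSeq Xs).IsAcyclic := by
      refine ⟨Xs1 ++ List.replicate (M - Xs1.length) ∅, ?_, ?_⟩
      · simp
        omega
      · rw [Tournament.invSeq_append, Tournament.invSeq_replicate_empty]
        exact hacy1
    subst hlen
    obtain ⟨σ, hσ⟩ := Tournament.exists_perm _ hacy
    refine ⟨(σ, Xs.get), ?_⟩
    simpa [List.ofFn_get] using hσ
  choose f hf using key
  have hinj : Function.Injective f := by
    intro T1 T2 h
    apply Subtype.ext
    apply Tournament.invSeq_injective (List.ofFn (f T2).2)
    apply Tournament.ext'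
    intro x y
    have h1 := hf T1 x y
    have h2 := hf T2 x y
    rw [h] at h1
    simp only
    rw [h1, h2]
  have hcard : Nat.card ↥S ≤
      Nat.card (Equiv.Perm (Fin n) × (Fin M → Set (Fin n))) :=
    Nat.card_le_card_of_injective f hinj
  have heq : Nat.card (Equiv.Perm (Fin n) × (Fin M → Set (Fin n))) =
      Nat.factorial n * 2 ^ (n * M) := by
    simp [Nat.card_eq_fintype_card, Fintype.card_perm, mul_comm, pow_mul]
  rw [← Nat.card_coe_set_eq, hM]
  rw [heq] at hcard
  exact hcard
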